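/- Let r > 0 and let ζ, θ be real numbers with |θ| ≤ π. Define D by cosh D = cosh(ζ)·cosh²(r) − cos(θ)·sinh²(r) (with D ≥ 0), and define the Euclidean distance d_E by d_E² = ζ²·cosh²(r) + θ²·sinh²(r). If A, B are reals with 0 < |θ| ≤ A ≤ π and 0 < |ζ| ≤ B, then ((1 − cos A)/A²)·d_E² ≤ cosh D − 1 ≤ ((cosh B − 1)/B²)·d_E². -/

import Mathlib

open Real

lemma aux_convexOn_sinh : ConvexOn ℝ (Set.Ici (0:ℝ)) Real.sinh := by
  apply convexOn_of_deriv2_nonneg' (convex_Ici 0)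
    Real.differentiable_sinh.differentiableOn
  · rw [Real.deriv_sinh]; exact Real.differentiable_cosh.differentiableOn
  · intro x hx
    have h2 : deriv^[2] Real.sinh = Real.sinh := by
      show deriv (deriv Real.sinh) = _
      rw [Real.deriv_sinh, Real.deriv_cosh]
    rw [h2]
    exact Real.sinh_nonneg_iff.2 hx

lemma aux_sinh_ratio {x y : ℝ} (hx : 0 ≤ x) (hxy : x ≤ y) (hy : 0 < y) :
    y * Real.sinh x ≤ x * Real.sinh y := by
  have h := aux_convexOn_sinh.2 (Set.mem_Ici.2 (le_refl (0:ℝ))) (Set.mem_Ici.2 hy.le)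
    (show (0:ℝ) ≤ 1 - x / y by
      have : x / y ≤ 1 := (div_le_one hy).2 hxy; linarith)
    (show (0:ℝ) ≤ x / y by positivity) (by ring)
  have hxy' : (1 - x / y) • (0:ℝ) + (x / y) • y = x := by
    rw [smul_eq_mul, smul_eq_mul, mul_zero, zero_add, div_mul_cancel₀ x hy.ne']
  rw [hxy'] at h
  simp only [smul_eq_mul, Real.sinh_zero, mul_zero, zero_add] at h
  calc y * Real.sinh x ≤ y * (x / y * Real.sinh y) :=
        mul_le_mul_of_nonneg_left h hy.le
    _ = x * Real.sinh y := by field_simp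

lemma aux_sin_ratio {x y : ℝ} (hx : 0 ≤ x) (hxy : x ≤ y) (hy0 : 0 < y) (hy : y ≤ π) :
    x * Real.sin y ≤ y * Real.sin x := by
  have h := strictConcaveOn_sin_Icc.concaveOn.2
    (Set.mem_Icc.2 ⟨le_refl (0:ℝ), Real.pi_pos.le⟩) (Set.mem_Icc.2 ⟨hy0.le, hy⟩)
    (show (0:ℝ) ≤ 1 - x / y by
      have : x / y ≤ 1 := (div_le_one hy0).2 hxy; linarith)
    (show (0:ℝ) ≤ x / y by positivity) (by ring)
  have hxy' : (1 - x / y) • (0:ℝ) + (x / y) • y = x := by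
    rw [smul_eq_mul, smul_eq_mul, mul_zero, zero_add, div_mul_cancel₀ x hy0.ne']
  rw [hxy'] at h
  simp only [smul_eq_mul, Real.sin_zero, mul_zero, zero_add] at h
  calc x * Real.sin y = y * (x / y * Real.sin y) := by field_simp
    _ ≤ y * Real.sin x := mul_le_mul_of_nonneg_left h hy0.le

lemma aux_one_sub_cos_le (x : ℝ) : 1 - Real.cos x ≤ x ^ 2 / 2 := by
  have h := Real.sin_sq_eq_half_sub (x / 2)
  have h2 : Real.sin (x / 2) ^ 2 ≤ (x / 2) ^ 2 := Real.sin_sq_le_sq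
  have : Real.cos (2 * (x / 2)) = Real.cos x := by rw [show 2 * (x/2) = x by ring]
  rw [this] at h
  nlinarith

lemma aux_cosh_lb (x : ℝ) : x ^ 2 / 2 ≤ Real.cosh x - 1 := by
  have h : Real.cosh (2 * (x / 2)) = Real.cosh (x/2) ^2 + Real.sinh (x/2) ^ 2 :=
    Real.cosh_two_mul _
  have h2 : Real.cosh (x/2) ^ 2 = Real.sinh (x/2) ^ 2 + 1 := Real.cosh_sq _
  have h3 : (x / 2) ^ 2 ≤ Real.sinh (x / 2) ^ 2 := by
    rcases le_or_gt 0 x with hx | hx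
    · have := Real.self_le_sinh_iff.2 (by linarith : (0:ℝ) ≤ x / 2)
      nlinarith
    · have := Real.sinh_le_self_iff.2 (by linarith : x / 2 ≤ 0)
      have hs : Real.sinh (x/2) ≤ 0 := Real.sinh_nonpos_iff.2 (by linarith)
      nlinarith
  have : Real.cosh (2 * (x / 2)) = Real.cosh x := by rw [show 2 * (x/2) = x by ring]
  nlinarith

-- 1 - cos x ≤ 2 sin(x/2)^2 identity:
lemma aux_one_sub_cos (x : ℝ) : 1 - Real.cos x = 2 * Real.sin (x / 2) ^ 2 := by
  have h := Real.sin_sq_eq_half_sub (x / 2)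
  have : Real.cos (2 * (x / 2)) = Real.cos x := by rw [show 2 * (x/2) = x by ring]
  rw [this] at h; linarith

lemma aux_cosh_sub_one (x : ℝ) : Real.cosh x - 1 = 2 * Real.sinh (x / 2) ^ 2 := by
  have h : Real.cosh (2 * (x / 2)) = Real.cosh (x/2) ^2 + Real.sinh (x/2) ^ 2 :=
    Real.cosh_two_mul _
  have h2 : Real.cosh (x/2) ^ 2 = Real.sinh (x/2) ^ 2 + 1 := Real.cosh_sq _
  have : Real.cosh (2 * (x / 2)) = Real.cosh x := by rw [show 2 * (x/2) = x by ring]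
  nlinarith

theorem stmt_11 (r ζ θ A B D : ℝ) (hr : 0 < r)
    (hθπ : |θ| ≤ Real.pi)
    (hθ : 0 < |θ|) (hθA : |θ| ≤ A) (hAπ : A ≤ Real.pi)
    (hζ : 0 < |ζ|) (hζB : |ζ| ≤ B)
    (hD : 0 ≤ D)
    (hcoshD : Real.cosh D =
      Real.cosh ζ * Real.cosh r ^ 2 - Real.cos θ * Real.sinh r ^ 2) :
    ((1 - Real.cos A) / A ^ 2) * (ζ ^ 2 * Real.cosh r ^ 2 + θ ^ 2 * Real.sinh r ^ 2)
      ≤ Real.cosh D - 1 ∧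
    Real.cosh D - 1 ≤
      ((Real.cosh B - 1) / B ^ 2) * (ζ ^ 2 * Real.cosh r ^ 2 + θ ^ 2 * Real.sinh r ^ 2) := by
  have hA : 0 < A := lt_of_lt_of_le hθ hθA
  have hB : 0 < B := lt_of_lt_of_le hζ hζB
  have hc2 : Real.cosh r ^ 2 = Real.sinh r ^ 2 + 1 := Real.cosh_sq r
  have hs : 0 < Real.sinh r := Real.sinh_pos_iff.2 hr
  have hc : 0 < Real.cosh r := Real.cosh_pos r
  -- decomposition
  have hdec : Real.cosh D - 1 =
      (Real.cosh ζ - 1) * Real.cosh r ^ 2 + (1 - Real.cos θ) * Real.sinh r ^ 2 := by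
    rw [hcoshD, hc2]; ring
  -- even symmetry
  have hcosθ : Real.cos θ = Real.cos |θ| := (Real.cos_abs θ).symm
  have hcoshζ : Real.cosh ζ = Real.cosh |ζ| := (Real.cosh_abs ζ).symm
  -- Lower bound pieces. L = (1-cos A)/A^2 ≤ 1/2
  have hL2 : (1 - Real.cos A) / A ^ 2 ≤ 1 / 2 := by
    rw [div_le_div_iff₀ (by positivity) (by norm_num)]
    have := aux_one_sub_cos_le A; nlinarith
  have hLζ : (1 - Real.cos A) / A ^ 2 * ζ ^ 2 ≤ Real.cosh ζ - 1 := by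
    have h1 : (1 - Real.cos A) / A ^ 2 * ζ ^ 2 ≤ 1 / 2 * ζ ^ 2 :=
      mul_le_mul_of_nonneg_right hL2 (sq_nonneg ζ)
    have := aux_cosh_lb ζ; linarith
  have hLθ : (1 - Real.cos A) / A ^ 2 * θ ^ 2 ≤ 1 - Real.cos θ := by
    rw [div_mul_eq_mul_div, div_le_iff₀ (by positivity)]
    -- (1 - cos A) * θ^2 ≤ (1 - cos θ) * A^2
    have hkey : |θ| * Real.sin (A / 2) ≤ A * Real.sin (|θ| / 2) := by
      have := aux_sin_ratio (x := |θ| / 2) (y := A / 2) (by positivity)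
        (by linarith) (by positivity) (by linarith [Real.pi_pos])
      linarith
    have hsA : 0 ≤ Real.sin (A / 2) :=
      Real.sin_nonneg_of_nonneg_of_le_pi (by positivity) (by linarith [Real.pi_pos])
    have hsθ : 0 ≤ Real.sin (|θ| / 2) :=
      Real.sin_nonneg_of_nonneg_of_le_pi (by positivity) (by linarith [Real.pi_pos])
    have hsq : (|θ| * Real.sin (A / 2)) ^ 2 ≤ (A * Real.sin (|θ| / 2)) ^ 2 :=
      pow_le_pow_left₀ (by positivity) hkey 2
    rw [mul_pow, mul_pow] at hsq
    have e1 := aux_one_sub_cos A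
    have e2 := aux_one_sub_cos |θ|
    rw [hcosθ]
    have key : (1 - Real.cos |θ|) * A ^ 2 - (1 - Real.cos A) * θ ^ 2
        = 2 * (A ^ 2 * Real.sin (|θ| / 2) ^ 2 - θ ^ 2 * Real.sin (A / 2) ^ 2) := by
      rw [e1, e2]; ring
    have hθ2 : |θ| ^ 2 = θ ^ 2 := sq_abs θ
    linarith [hsq, hθ2.symm ▸ hsq]
  -- Upper bound pieces. U = (cosh B - 1)/B^2 ≥ 1/2
  have hU2 : 1 / 2 ≤ (Real.cosh B - 1) / B ^ 2 := by
    rw [div_le_div_iff₀ (by norm_num) (by positivity)]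
    have := aux_cosh_lb B; nlinarith
  have hUθ : 1 - Real.cos θ ≤ (Real.cosh B - 1) / B ^ 2 * θ ^ 2 := by
    have h1 : 1 / 2 * θ ^ 2 ≤ (Real.cosh B - 1) / B ^ 2 * θ ^ 2 :=
      mul_le_mul_of_nonneg_right hU2 (sq_nonneg θ)
    have := aux_one_sub_cos_le θ; linarith
  have hUζ : Real.cosh ζ - 1 ≤ (Real.cosh B - 1) / B ^ 2 * ζ ^ 2 := by
    rw [div_mul_eq_mul_div, le_div_iff₀ (by positivity)]
    have hkey : B * Real.sinh (|ζ| / 2) ≤ |ζ| * Real.sinh (B / 2) := by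
      have := aux_sinh_ratio (x := |ζ| / 2) (y := B / 2) (by positivity)
        (by linarith) (by positivity)
      linarith
    have hsB : 0 ≤ Real.sinh (B / 2) := Real.sinh_nonneg_iff.2 (by positivity)
    have hsζ : 0 ≤ Real.sinh (|ζ| / 2) := Real.sinh_nonneg_iff.2 (by positivity)
    have hsq : (B * Real.sinh (|ζ| / 2)) ^ 2 ≤ (|ζ| * Real.sinh (B / 2)) ^ 2 :=
      pow_le_pow_left₀ (by positivity) hkey 2
    rw [mul_pow, mul_pow] at hsq
    have e1 := aux_cosh_sub_one B
    have e2 := aux_cosh_sub_one |ζ|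
    rw [hcoshζ]
    have key : (Real.cosh B - 1) * ζ ^ 2 - (Real.cosh |ζ| - 1) * B ^ 2
        = 2 * (|ζ| ^ 2 * Real.sinh (B / 2) ^ 2 - B ^ 2 * Real.sinh (|ζ| / 2) ^ 2) := by
      rw [e1, e2, sq_abs]; ring
    linarith
  constructor
  · rw [hdec]
    have t1 : (1 - Real.cos A) / A ^ 2 * ζ ^ 2 * Real.cosh r ^ 2 ≤
        (Real.cosh ζ - 1) * Real.cosh r ^ 2 :=
      mul_le_mul_of_nonneg_right hLζ (by positivity)
    have t2 : (1 - Real.cos A) / A ^ 2 * θ ^ 2 * Real.sinh r ^ 2 ≤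
        (1 - Real.cos θ) * Real.sinh r ^ 2 :=
      mul_le_mul_of_nonneg_right hLθ (by positivity)
    have e : (1 - Real.cos A) / A ^ 2 * (ζ ^ 2 * Real.cosh r ^ 2 + θ ^ 2 * Real.sinh r ^ 2)
        = (1 - Real.cos A) / A ^ 2 * ζ ^ 2 * Real.cosh r ^ 2
          + (1 - Real.cos A) / A ^ 2 * θ ^ 2 * Real.sinh r ^ 2 := by ring
    linarith
  · rw [hdec]
    have t1 : (Real.cosh ζ - 1) * Real.cosh r ^ 2 ≤
        (Real.cosh B - 1) / B ^ 2 * ζ ^ 2 * Real.cosh r ^ 2 :=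
      mul_le_mul_of_nonneg_right hUζ (by positivity)
    have t2 : (1 - Real.cos θ) * Real.sinh r ^ 2 ≤
        (Real.cosh B - 1) / B ^ 2 * θ ^ 2 * Real.sinh r ^ 2 :=
      mul_le_mul_of_nonneg_right hUθ (by positivity)
    have e : (Real.cosh B - 1) / B ^ 2 * (ζ ^ 2 * Real.cosh r ^ 2 + θ ^ 2 * Real.sinh r ^ 2)
        = (Real.cosh B - 1) / B ^ 2 * ζ ^ 2 * Real.cosh r ^ 2
          + (Real.cosh B - 1) / B ^ 2 * θ ^ 2 * Real.sinh r ^ 2 := by ring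
    linarith
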